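/- Let φ be a trace-valued (σ,ε)-sesquilinear form on V, let a be a nonzero isotropic vector with a ∉ Rad(φ), and let l be a 2-dimensional subspace of V containing a such that l is not contained in a⊥. Then there exists an isotropic vector b ∈ l with b ≠ 0 and span{b} ≠ span{a}. -/

import Mathlib

open MulOpposite

variable {K : Type*} [DivisionRing K]

/-- `σ` is an anti-automorphism of the division ring `K`. -/
def IsAntiAuto (σ : K → K) : Prop :=
  Function.Bijective σ ∧ (∀ a b : K, σ (a + b) = σ a + σ b) ∧
    ∀ a b : K, σ (a * b) = σ b * σ a

/-- `(σ, ε)` is an admissible pair: `σ` is an anti-automorphism, `ε ≠ 0`,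
`σ ε = ε⁻¹` and `σ ∘ σ` is conjugation by `ε`. -/
def IsAdmissiblePair (σ : K → K) (ε : K) : Prop :=
  IsAntiAuto σ ∧ ε ≠ 0 ∧ σ ε = ε⁻¹ ∧ ∀ t : K, σ (σ t) = ε * t * ε⁻¹

variable {V : Type*} [AddCommGroup V] [Module Kᵐᵒᵖ V]

/-- `φ` is a reflexive `(σ, ε)`-sesquilinear form on the right `K`-vector space `V`
(a right `K`-vector space is a left `Kᵐᵒᵖ`-vector space; right scalar multiplication
of `x` by `α` is `op α • x`). -/
def IsSesq (σ : K → K) (ε : K) (φ : V → V → K) : Prop :=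
  (∀ x y z : V, φ (x + y) z = φ x z + φ y z) ∧
  (∀ x y z : V, φ x (y + z) = φ x y + φ x z) ∧
  (∀ (α : K) (x y : V), φ (op α • x) y = σ α * φ x y) ∧
  (∀ (β : K) (x y : V), φ x (op β • y) = φ x y * β) ∧
  ∀ x y : V, φ y x = σ (φ x y) * ε

/-- A subspace `S` of `V` is totally isotropic for `φ` if `φ` vanishes identically on it. -/
def IsTotIso (φ : V → V → K) (S : Submodule Kᵐᵒᵖ V) : Prop :=
  ∀ x ∈ S, ∀ y ∈ S, φ x y = 0

/-- A maximal totally isotropic subspace: totally isotropic and maximal under inclusion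
among totally isotropic subspaces. -/
def IsMaxTotIso (φ : V → V → K) (S : Submodule Kᵐᵒᵖ V) : Prop :=
  IsTotIso φ S ∧ ∀ T : Submodule Kᵐᵒᵖ V, IsTotIso φ T → S ≤ T → T = S

/-- `φ` is trace-valued: every `φ(x,x)` is of the form `t + σ(t)ε`. -/
def IsTraceValued (σ : K → K) (ε : K) (φ : V → V → K) : Prop :=
  ∀ x : V, ∃ t : K, φ x x = t + σ t * ε

/-- For a trace-valued form `φ`, a nonzero isotropic vector `a ∉ Rad(φ)`,
and a 2-dimensional subspace `l` containing `a` with `l ⊄ a⊥`, there exists a nonzero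
isotropic vector `b ∈ l` with `span{b} ≠ span{a}`. -/
theorem stmt_5 (σ : K → K) (ε : K) (hpair : IsAdmissiblePair σ ε)
    (φ : V → V → K) (hφ : IsSesq σ ε φ) (htv : IsTraceValued σ ε φ)
    (a : V) (ha0 : a ≠ 0) (haiso : φ a a = 0) (harad : ¬ ∀ x : V, φ a x = 0)
    (l : Submodule Kᵐᵒᵖ V) (hal : a ∈ l) (hl2 : Module.rank Kᵐᵒᵖ ↥l = 2)
    (hlnsub : ¬ (l : Set V) ⊆ {x : V | φ a x = 0}) :
    ∃ b ∈ l, φ b b = 0 ∧ b ≠ 0 ∧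
      Submodule.span Kᵐᵒᵖ ({b} : Set V) ≠ Submodule.span Kᵐᵒᵖ ({a} : Set V) := by
  obtain ⟨⟨⟨hinj, hsurj⟩, hsadd, hsmul⟩, hε0, hσε, hσσ⟩ := hpair
  obtain ⟨hadd1, hadd2, hmul1, hmul2, hrefl⟩ := hφ
  have hσ0 : σ 0 = 0 := by
    have h := hsadd 0 0
    rw [add_zero] at h
    exact left_eq_add.mp h
  have hσne : ∀ x : K, x ≠ 0 → σ x ≠ 0 := by
    intro x hx hc
    exact hx (hinj (hc.trans hσ0.symm))
  have hσ1 : σ 1 = 1 := by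
    have h : σ 1 * σ 1 = σ 1 * 1 := by
      rw [mul_one, ← hsmul 1 1, mul_one]
    exact mul_left_cancel₀ (hσne 1 one_ne_zero) h
  have hσneg : ∀ x : K, σ (-x) = - σ x := by
    intro x
    have h := hsadd x (-x)
    rw [add_neg_cancel, hσ0] at h
    exact (neg_eq_of_add_eq_zero_right h.symm).symm
  -- get c ∈ l with φ a c ≠ 0
  rw [Set.not_subset] at hlnsub
  obtain ⟨c, hcl, hc⟩ := hlnsub
  simp only [Set.mem_setOf_eq] at hc
  -- φ c a ≠ 0
  have hca : φ c a ≠ 0 := by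
    rw [hrefl a c]
    exact mul_ne_zero (hσne _ hc) hε0
  obtain ⟨α, hα⟩ := hsurj (φ c a)⁻¹
  obtain ⟨c', hc'def⟩ : ∃ c', c' = op α • c := ⟨_, rfl⟩
  have hc'l : c' ∈ l := hc'def ▸ Submodule.smul_mem _ _ hcl
  have hc'a : φ c' a = 1 := by
    rw [hc'def, hmul1, hα, inv_mul_cancel₀ hca]
  have hac' : φ a c' = ε := by
    rw [hrefl c' a, hc'a, hσ1, one_mul]
  obtain ⟨s, hs⟩ := htv c'
  refine ⟨op (-s) • a + c', Submodule.add_mem _ (Submodule.smul_mem _ _ hal) hc'l, ?_, ?_, ?_⟩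
  · simp only [hadd1, hadd2, hmul1, hmul2, haiso, hs, hc'a, hac', hσneg]
    noncomm_ring
  · intro hb
    have h := congrArg (fun v => φ v a) hb
    rw [hadd1, hmul1, haiso, mul_zero, zero_add, hc'a] at h
    have h0 : φ (0 : V) a = 0 := by
      have := hadd1 0 0 a
      simpa using this.symm
    rw [h0] at h
    exact one_ne_zero h
  · intro hspan
    have hb : op (-s) • a + c' ∈ Submodule.span Kᵐᵒᵖ ({a} : Set V) := by
      rw [← hspan]
      exact Submodule.mem_span_singleton_self _
    obtain ⟨r, hr⟩ := Submodule.mem_span_singleton.mp hb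
    have h := congrArg (fun v => φ v a) hr
    rw [hadd1, hmul1, haiso, mul_zero, zero_add, hc'a] at h
    have : φ (r • a) a = 0 := by
      rw [← MulOpposite.op_unop r, hmul1, haiso, mul_zero]
    rw [this] at h
    exact one_ne_zero h.symm
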